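/- The strong modulus of transfer δ(ε₁,ε₂) is non-decreasing in both arguments: for all 0 < ε₁ ≤ ε₁' and 0 < ε₂ ≤ ε₂', δ(ε₁,ε₂) ≤ δ(ε₁',ε₂'). -/
import Mathlib


noncomputable def excess {H : Type*} (R : H → ℝ) (h : H) : ℝ :=
  R h - sInf (Set.range R)

/-- Excess risk w.r.t. a subclass `H₀ ⊆ H`. -/
noncomputable def excessOn {H : Type*} (R : H → ℝ) (S : Set H) (h : H) : ℝ :=
  R h - sInf (R '' S)

def cset {H : Type*} (R : H → ℝ) (ε : ℝ) : Set H :=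
  {h | excess R h ≤ ε}

/-- Weak modulus of transfer `δ(ε) = sup {E_Q(h) : E_P(h) ≤ ε}` (valued in `(-∞,∞]`). -/
noncomputable def wmod {H : Type*} (RP RQ : H → ℝ) (ε : ℝ) : EReal :=
  sSup ((fun h => (excess RQ h : EReal)) '' cset RP ε)

/-- Strong modulus of transfer
`δ(ε₁,ε₂) = sup {E_Q(h) : h ∈ H_Q(ε₁), E_P(h;H_Q(ε₁)) ≤ ε₂}`. -/
noncomputable def smod {H : Type*} (RP RQ : H → ℝ) (ε₁ ε₂ : ℝ) : EReal :=
  sSup ((fun h => (excess RQ h : EReal)) ''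
    {h | h ∈ cset RQ ε₁ ∧ excessOn RP (cset RQ ε₁) h ≤ ε₂})

noncomputable def pivot {H : Type*} (RP RQ : H → ℝ) : EReal :=
  ⨆ (ε : ℝ) (_ : 0 < ε), sInf ((fun h => (excess RQ h : EReal)) '' cset RP ε)

/-- the strong modulus is non-decreasing in both arguments. -/
theorem smod_monotone {H : Type*} [Nonempty H] (RP RQ : H → ℝ)
    (hRP : ∀ h, 0 ≤ RP h) (hRQ : ∀ h, 0 ≤ RQ h)
    (ε₁ ε₁' ε₂ ε₂' : ℝ) (h₁ : 0 < ε₁) (h₁' : ε₁ ≤ ε₁')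
    (h₂ : 0 < ε₂) (h₂' : ε₂ ≤ ε₂') :
    smod RP RQ ε₁ ε₂ ≤ smod RP RQ ε₁' ε₂' := by
  apply sSup_le
  rintro x ⟨h, ⟨hh1, hh2⟩, rfl⟩
  set I := sInf (RP '' cset RQ ε₁) with hI
  set I' := sInf (RP '' cset RQ ε₁') with hI'
  have hsub : cset RQ ε₁ ⊆ cset RQ ε₁' := fun h hh => le_trans hh h₁'
  have hne : (cset RQ ε₁).Nonempty := by
    have hbdd : BddBelow (Set.range RQ) := ⟨0, fun x ⟨h, hx⟩ => hx ▸ hRQ h⟩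
    obtain ⟨y, hy, hlt⟩ := Real.lt_sInf_add_pos (Set.range_nonempty RQ) h₁
    obtain ⟨h', rfl⟩ := hy
    exact ⟨h', by simp only [cset, excess, Set.mem_setOf_eq]; linarith⟩
  have hne' : (cset RQ ε₁').Nonempty := hne.mono hsub
  have hbddP : BddBelow (RP '' cset RQ ε₁) := ⟨0, fun x ⟨h', _, hx⟩ => hx ▸ hRP h'⟩
  have hbddP' : BddBelow (RP '' cset RQ ε₁') := ⟨0, fun x ⟨h', _, hx⟩ => hx ▸ hRP h'⟩
  simp only [excessOn] at hh2
  by_cases hcase : RP h - I' ≤ ε₂'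
  · exact le_sSup ⟨h, ⟨hsub hh1, hcase⟩, rfl⟩
  · push_neg at hcase
    -- I' < RP h - ε₂' ≤ I + ε₂ - ε₂' ≤ I
    have hlt : I' < min I (I' + ε₂') := lt_min (by linarith) (by linarith)
    obtain ⟨y, hy, hylt⟩ := exists_lt_of_csInf_lt (hne'.image RP) hlt
    obtain ⟨g, hg, rfl⟩ := hy
    have hgI : RP g < I := lt_of_lt_of_le hylt (min_le_left _ _)
    have hgfeas : excessOn RP (cset RQ ε₁') g ≤ ε₂' := by
      simp only [excessOn, ← hI']
      have := lt_of_lt_of_le hylt (min_le_right _ _)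
      linarith
    have hgnot : g ∉ cset RQ ε₁ := fun hmem =>
      absurd (csInf_le hbddP ⟨g, hmem, rfl⟩) (not_le.mpr hgI)
    have hgQ : ε₁ < excess RQ g := not_le.mp hgnot
    have hhg : excess RQ h ≤ excess RQ g := le_trans hh1 hgQ.le
    exact le_trans (show (excess RQ h : EReal) ≤ (excess RQ g : EReal) from by
      exact_mod_cast hhg) (le_sSup ⟨g, ⟨hg, hgfeas⟩, rfl⟩)
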